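/- Every 1-wire-mismatch permutation gate is in the Clifford Hierarchy. Precisely, suppose a permutation P₁ on n qubits is written as a finite product of multi-controlled-NOT gates in which exactly one wire (the 'mismatched wire') carries both targets and controls. Then P₁ can be rewritten as X⃗ · H_targ · P · D · H_targ where X⃗ is a Pauli X string, H_targ is a product of Hadamards on the target-support wires, P is a 0-wire-mismatch permutation in the Clifford Hierarchy, and D is a diagonal gate in the Clifford Hierarchy; hence P₁ ∈ 𝒞ℋ. -/

import Mathlib

/-- Basis states of `n` qubits. -/
abbrev QState (n : ℕ) := Fin n → ZMod 2

/-- `2^n × 2^n` complex matrices, indexed by basis states of `n` qubits. -/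
abbrev QMat (n : ℕ) := Matrix (QState n) (QState n) ℂ

noncomputable section

namespace CHPaper

/-- Pauli X string: the permutation matrix adding the vector `v` (bit flips). -/
def XStr {n : ℕ} (v : QState n) : QMat n :=
  Matrix.of fun x y => if x = y + v then (1 : ℂ) else 0

/-- Pauli Z string: diagonal sign matrix determined by the vector `v`. -/
def ZStr {n : ℕ} (v : QState n) : QMat n :=
  Matrix.diagonal fun x => (-1 : ℂ) ^ (ZMod.val (∑ i, v i * x i))

/-- The `n`-qubit Pauli group (with phases that are fourth roots of unity). -/
def Pauli (n : ℕ) : Set (QMat n) :=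
  {M | ∃ (c : ℂ) (v w : QState n), c ^ 4 = 1 ∧ M = c • (XStr v * ZStr w)}

/-- The Clifford Hierarchy: level 1 is the Pauli group, and
`U ∈ CH n (k+1)` iff `U` is unitary and conjugates every Pauli into `CH n k`. -/
def CH (n : ℕ) : ℕ → Set (QMat n)
  | 0 => {1}
  | 1 => Pauli n
  | (k+2) => {U | U ∈ Matrix.unitaryGroup (QState n) ℂ ∧
      ∀ P ∈ Pauli n, U * P * star U ∈ CH n (k+1)}

/-- Membership in some finite level of the Clifford Hierarchy. -/
def InCH {n : ℕ} (M : QMat n) : Prop := ∃ k, M ∈ CH n k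

/-- The permutation matrix of a permutation of basis states. -/
def permMat {n : ℕ} (σ : Equiv.Perm (QState n)) : QMat n :=
  Matrix.of fun x y => if x = σ y then (1 : ℂ) else 0

/-- A matrix is a permutation matrix. -/
def IsPermMat {n : ℕ} (M : QMat n) : Prop :=
  ∃ σ : Equiv.Perm (QState n), M = permMat σ

/-- A monomial (generalized permutation) matrix: exactly one nonzero entry in
each row and column. -/
def IsMonomial {n : ℕ} (M : QMat n) : Prop :=
  ∃ (σ : Equiv.Perm (QState n)) (d : QState n → ℂ), (∀ x, d x ≠ 0) ∧
    M = Matrix.of fun x y => if x = σ y then d y else 0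

/-- The action of a multi-controlled NOT with target t, control set S, and
control polarities p: flip bit t when every control bit matches its polarity. -/
def mcxFun {n : ℕ} (t : Fin n) (S : Finset (Fin n)) (p : QState n)
    (x : QState n) : QState n :=
  if ∀ i ∈ S, x i = p i then Function.update x t (x t + 1) else x

/-- The matrix of a multi-controlled NOT gate. -/
def mcxMat {n : ℕ} (t : Fin n) (S : Finset (Fin n)) (p : QState n) : QMat n :=
  Matrix.of fun x y => if x = mcxFun t S p y then (1 : ℂ) else 0
/-- Hadamard gates applied to the wires in T (identity elsewhere). -/
def Hmat {n : ℕ} (T : Finset (Fin n)) : QMat n :=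
  Matrix.of fun x y =>
    if ∀ i : Fin n, i ∉ T → x i = y i then
      (∏ i ∈ T, (-1 : ℂ) ^ (ZMod.val (x i * y i))) *
        (((Real.sqrt 2 : ℝ) : ℂ))⁻¹ ^ T.card
    else 0

variable {n : ℕ}

/-! ### Scalar helpers -/

lemma z2 (s : ZMod 2) : s = 0 ∨ s = 1 := by revert s; decide

lemma z2_add_self (s : ZMod 2) : s + s = 0 := by revert s; decide

def sgn (s : ZMod 2) : ℂ := (-1) ^ s.val

lemma sgn_zero : sgn 0 = 1 := rfl

lemma sgn_one : sgn 1 = -1 := by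
  norm_num [sgn, show ((1:ZMod 2)).val = 1 from rfl]

lemma sgn_add (s t : ZMod 2) : sgn (s + t) = sgn s * sgn t := by
  rcases z2 s with h | h <;> rcases z2 t with h' | h' <;> subst h <;> subst h' <;>
    simp [sgn, show ((0:ZMod 2)+0).val = 0 from rfl, show ((0:ZMod 2)+1).val = 1 from rfl,
      show ((1:ZMod 2)+0).val = 1 from rfl, show ((1:ZMod 2)+1).val = 0 from rfl,
      show ((0:ZMod 2)).val = 0 from rfl, show ((1:ZMod 2)).val = 1 from rfl]

lemma sgn_mul_self (s : ZMod 2) : sgn s * sgn s = 1 := by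
  rcases z2 s with h | h <;> subst h <;> simp [sgn_zero, sgn_one]

lemma sgn_pow4 (s : ZMod 2) : (sgn s) ^ 4 = 1 := by
  rcases z2 s with h | h <;> subst h <;> norm_num [sgn_zero, sgn_one]

lemma conj_sgn (s : ZMod 2) : (starRingEnd ℂ) (sgn s) = sgn s := by
  rcases z2 s with h | h <;> subst h <;> simp [sgn_zero, sgn_one]

lemma abs_of_pow4 {c : ℂ} (hc : c ^ 4 = 1) : c * (starRingEnd ℂ) c = 1 := by
  have h4 : (‖c‖) ^ 4 = 1 := by
    rw [← norm_pow, hc, norm_one]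
  have h0 : (0:ℝ) ≤ ‖c‖ := norm_nonneg c
  have hf : (‖c‖ - 1) * ((‖c‖ + 1) * ((‖c‖) ^ 2 + 1)) = 0 := by
    linear_combination h4
  have h1 : ‖c‖ = 1 := by
    rcases mul_eq_zero.mp hf with h | h
    · linarith
    · nlinarith [sq_nonneg (‖c‖)]
  rw [Complex.mul_conj]
  rw [Complex.normSq_eq_norm_sq, h1]
  norm_num

/-! ### char-2 vector helpers -/

lemma qself (x : QState n) : x + x = 0 := funext fun i => z2_add_self (x i)

lemma qcancel (x y : QState n) : x + (x + y) = y := by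
  rw [← add_assoc, qself, zero_add]

lemma qsub (x y : QState n) : x - y = x + y := by
  funext i
  have : ∀ a b : ZMod 2, a - b = a + b := by decide
  exact this _ _

lemma z2sub (a b : ZMod 2) : a - b = a + b := by revert a b; decide

/-! ### Mono matrices -/

def Mono (π : QState n → QState n) (d : QState n → ℂ) : QMat n :=
  Matrix.of fun x y => if x = π y then d y else 0

lemma Mono_apply (π : QState n → QState n) (d : QState n → ℂ) (x y : QState n) :
    Mono π d x y = if x = π y then d y else 0 := rfl

lemma Mono_mul (π π' : QState n → QState n) (d d' : QState n → ℂ) :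
    Mono π d * Mono π' d' = Mono (π ∘ π') (fun y => d (π' y) * d' y) := by
  ext x z
  rw [Matrix.mul_apply]
  simp only [Mono_apply, ite_mul, zero_mul, mul_ite, mul_zero]
  rw [Finset.sum_ite_eq' Finset.univ (π' z) (fun y => if x = π y then d y * d' z else 0)]
  simp [Function.comp]

lemma Mono_one : Mono (n := n) id (fun _ => 1) = 1 := by
  ext x y
  simp [Mono_apply, Matrix.one_apply, eq_comm]

lemma Mono_congr {π π' : QState n → QState n} {d d' : QState n → ℂ}
    (h1 : ∀ y, π y = π' y) (h2 : ∀ y, d y = d' y) : Mono π d = Mono π' d' := by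
  have : π = π' := funext h1
  have h2' : d = d' := funext h2
  rw [this, h2']

lemma star_Mono (π ρ : QState n → QState n) (d : QState n → ℂ)
    (h1 : ∀ y, ρ (π y) = y) (h2 : ∀ x, π (ρ x) = x) :
    star (Mono π d) = Mono ρ (fun x => (starRingEnd ℂ) (d (ρ x))) := by
  ext x y
  rw [Matrix.star_apply, Mono_apply, Mono_apply]
  have hiff : (y = π x) ↔ (x = ρ y) := by
    constructor
    · intro h; rw [h, h1]
    · intro h; rw [h, h2]
  by_cases h : y = π x
  · rw [if_pos h, if_pos (hiff.mp h)]
    have : x = ρ y := hiff.mp h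
    rw [← this, Complex.star_def]
  · rw [if_neg h, if_neg (fun hh => h (hiff.mpr hh))]
    simp

lemma Mono_unitary (π ρ : QState n → QState n) (d : QState n → ℂ)
    (h1 : ∀ y, ρ (π y) = y) (h2 : ∀ x, π (ρ x) = x)
    (hd : ∀ y, d y * (starRingEnd ℂ) (d y) = 1) :
    Mono π d ∈ Matrix.unitaryGroup (QState n) ℂ := by
  constructor
  · rw [star_Mono π ρ d h1 h2, Mono_mul]
    rw [← Mono_one]
    apply Mono_congr
    · exact h1
    · intro y
      rw [h1 y]
      rw [mul_comm]
      exact hd y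
  · rw [star_Mono π ρ d h1 h2, Mono_mul]
    rw [← Mono_one]
    apply Mono_congr
    · exact h2
    · intro x
      exact hd (ρ x)

/-! ### Pauli normal forms -/

def lin (w x : QState n) : ZMod 2 := ∑ i, w i * x i

lemma lin_add (w x y : QState n) : lin w (x + y) = lin w x + lin w y := by
  simp [lin, mul_add, Finset.sum_add_distrib]

lemma lin_add_left (w w' x : QState n) : lin (w + w') x = lin w x + lin w' x := by
  simp [lin, add_mul, Finset.sum_add_distrib]

def PX (c : ℂ) (a b : QState n) : QMat n :=
  Mono (fun y => y + a) (fun y => c * sgn (lin b y))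

lemma XStr_eq (v : QState n) : XStr v = Mono (fun y => y + v) (fun _ => 1) := rfl

lemma ZStr_eq (w : QState n) : ZStr w = Mono id (fun y => sgn (lin w y)) := by
  ext x y
  rw [ZStr, Matrix.diagonal_apply, Mono_apply]
  by_cases h : x = y
  · subst h; simp [sgn, lin]
  · simp [h]

lemma pex_eq (c : ℂ) (v w : QState n) : c • (XStr v * ZStr w) = PX c v w := by
  rw [XStr_eq, ZStr_eq, Mono_mul]
  ext x y
  simp [Mono_apply, PX, Matrix.smul_apply, smul_eq_mul, mul_ite, mul_zero]

lemma PX_pauli {c : ℂ} (a b : QState n) (hc : c ^ 4 = 1) : PX c a b ∈ Pauli n :=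
  ⟨c, a, b, hc, (pex_eq c a b).symm⟩

lemma pauli_PX {M : QMat n} (h : M ∈ Pauli n) :
    ∃ (c : ℂ) (a b : QState n), c ^ 4 = 1 ∧ M = PX c a b := by
  obtain ⟨c, v, w, hc, rfl⟩ := h
  exact ⟨c, v, w, hc, pex_eq c v w⟩

lemma star_PX (c : ℂ) (a b : QState n) :
    star (PX c a b) = PX ((starRingEnd ℂ) c * sgn (lin b a)) a b := by
  rw [PX, star_Mono (fun y => y + a) (fun y => y + a) _
    (fun y => by show y + a + a = y; rw [add_assoc, qself, add_zero])
    (fun y => by show y + a + a = y; rw [add_assoc, qself, add_zero])]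
  apply Mono_congr (fun y => rfl)
  intro y
  rw [map_mul, conj_sgn, lin_add, sgn_add]
  ring

lemma PX_mul (c c' : ℂ) (a b a' b' : QState n) :
    PX c a b * PX c' a' b' = PX (c * c' * sgn (lin b a')) (a + a') (b + b') := by
  rw [PX, PX, Mono_mul]
  apply Mono_congr
  · intro y
    show y + a' + a = y + (a + a')
    rw [add_assoc, add_comm a' a]
  · intro y
    rw [lin_add, sgn_add, lin_add_left, sgn_add]
    ring

lemma PX_unitary {c : ℂ} (a b : QState n) (hc : c ^ 4 = 1) :
    PX c a b ∈ Matrix.unitaryGroup (QState n) ℂ := by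
  apply Mono_unitary (fun y => y + a) (fun y => y + a)
  · intro y; show y + a + a = y; rw [add_assoc, qself, add_zero]
  · intro y; show y + a + a = y; rw [add_assoc, qself, add_zero]
  · intro y
    rw [map_mul, conj_sgn]
    calc c * sgn (lin b y) * ((starRingEnd ℂ) c * sgn (lin b y))
        = (c * (starRingEnd ℂ) c) * (sgn (lin b y) * sgn (lin b y)) := by ring
      _ = 1 := by rw [abs_of_pow4 hc, sgn_mul_self, one_mul]

lemma CH_two_unfold (k : ℕ) : CH n (k+2) = {U | U ∈ Matrix.unitaryGroup (QState n) ℂ ∧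
      ∀ P ∈ Pauli n, U * P * star U ∈ CH n (k+1)} := rfl

lemma pauli_CH : ∀ (k : ℕ), ∀ M ∈ Pauli n, M ∈ CH n (k+1) := by
  intro k
  induction k with
  | zero => intro M hM; exact hM
  | succ k IH =>
    intro M hM
    obtain ⟨c, a, b, hc, rfl⟩ := pauli_PX hM
    rw [CH_two_unfold]
    refine ⟨PX_unitary a b hc, ?_⟩
    intro P hP
    obtain ⟨c', a', b', hc', rfl⟩ := pauli_PX hP
    rw [star_PX, PX_mul, PX_mul]
    apply IH
    apply PX_pauli
    simp only [mul_pow, sgn_pow4, ← map_pow, hc, hc', map_one, one_mul, mul_one]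
/-! ### The Gen class -/

def Gen (c : ℂ) (v : QState n) (u : QState n → QState n) (f : QState n → ZMod 2) : QMat n :=
  Mono (fun y => y + v + u y) (fun y => c * sgn (f y))

def Adm (A : Finset (Fin n)) (u : QState n → QState n) : Prop :=
  (∀ y i, i ∉ A → u y i = 0) ∧ ∀ y z, (∀ i ∉ A, y i = z i) → u y = u z

lemma Adm_absorb {A : Finset (Fin n)} {u : QState n → QState n} (h : Adm A u)
    (z s : QState n) (hs : ∀ i, i ∉ A → s i = 0) : u (z + s) = u z :=
  h.2 _ _ fun i hi => by simp [hs i hi]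

def genρ (v : QState n) (u : QState n → QState n) : QState n → QState n :=
  fun x => x + v + u (x + v)

lemma genρ_π {A : Finset (Fin n)} {u : QState n → QState n} (h : Adm A u)
    (v y : QState n) : genρ v u (y + v + u y) = y := by
  show (y + v + u y) + v + u ((y + v + u y) + v) = y
  have e1 : (y + v + u y) + v = y + u y := by
    rw [add_right_comm y v (u y), add_assoc, qself, add_zero]
  rw [e1, Adm_absorb h y (u y) (fun i hi => h.1 y i hi)]
  rw [add_assoc, qself, add_zero]

lemma genπ_ρ {A : Finset (Fin n)} {u : QState n → QState n} (h : Adm A u)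
    (v x : QState n) : genρ v u x + v + u (genρ v u x) = x := by
  show ((x + v + u (x + v)) + v) + u ((x + v) + u (x + v)) = x
  rw [Adm_absorb h (x + v) (u (x + v)) (fun i hi => h.1 (x + v) i hi)]
  rw [add_right_comm (x+v) (u (x+v)) v, add_assoc x v v, qself, add_zero,
    add_assoc, qself, add_zero]

lemma Gen_congr {c : ℂ} {v : QState n} {u u' : QState n → QState n}
    {f f' : QState n → ZMod 2} (hu : ∀ y, u y = u' y) (hf : ∀ y, f y = f' y) :
    Gen c v u f = Gen c v u' f' :=
  Mono_congr (fun y => by rw [hu y]) (fun y => by rw [hf y])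

lemma star_Gen {A : Finset (Fin n)} {u : QState n → QState n} (h : Adm A u)
    (c : ℂ) (v : QState n) (f : QState n → ZMod 2) :
    star (Gen c v u f)
      = Mono (genρ v u) (fun x => (starRingEnd ℂ) c * sgn (f (genρ v u x))) := by
  rw [Gen, star_Mono (fun y => y + v + u y) (genρ v u) _ (genρ_π h v) (genπ_ρ h v)]
  apply Mono_congr (fun y => rfl)
  intro y
  rw [map_mul, conj_sgn]

lemma gen_unitary {A : Finset (Fin n)} {u : QState n → QState n} (h : Adm A u)
    {c : ℂ} (v : QState n) (f : QState n → ZMod 2) (hc : c ^ 4 = 1) :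
    Gen c v u f ∈ Matrix.unitaryGroup (QState n) ℂ := by
  apply Mono_unitary (fun y => y + v + u y) (genρ v u) _ (genρ_π h v) (genπ_ρ h v)
  intro y
  rw [map_mul, conj_sgn]
  calc c * sgn (f y) * ((starRingEnd ℂ) c * sgn (f y))
      = (c * (starRingEnd ℂ) c) * (sgn (f y) * sgn (f y)) := by ring
    _ = 1 := by rw [abs_of_pow4 hc, sgn_mul_self, one_mul]

lemma gen_conj {A : Finset (Fin n)} {u : QState n → QState n} (h : Adm A u)
    {c : ℂ} (hc : c ^ 4 = 1) (v : QState n) (f : QState n → ZMod 2)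
    (c' : ℂ) (a b : QState n) :
    Gen c v u f * PX c' a b * star (Gen c v u f)
      = Gen c' a (fun x => u (x + v) + u (x + v + a))
          (fun x => f (genρ v u x + a) + f (genρ v u x) + lin b (genρ v u x)) := by
  rw [star_Gen h, Gen, PX, Mono_mul, Mono_mul, Gen]
  apply Mono_congr
  · intro x
    show (genρ v u x + a) + v + u (genρ v u x + a) = x + a + (u (x + v) + u (x + v + a))
    have e1 : genρ v u x + a = (x + v + a) + u (x + v) := by
      show (x + v + u (x + v)) + a = (x + v + a) + u (x + v)
      rw [add_right_comm (x + v) (u (x+v)) a]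
    have e2 : u (genρ v u x + a) = u (x + v + a) := by
      rw [e1]
      exact Adm_absorb h (x + v + a) (u (x+v)) (fun i hi => h.1 (x+v) i hi)
    rw [e2, e1]
    have e3 : ((x + v + a) + u (x + v)) + v = (x + a) + u (x + v) := by
      rw [add_right_comm (x + v + a) (u (x+v)) v, add_right_comm x v a,
        add_right_comm (x + a) v v, add_assoc (x+a) v v, qself, add_zero]
    rw [e3, add_assoc]
  · intro x
    show c * sgn (f ((genρ v u x) + a)) * (c' * sgn (lin b (genρ v u x)))
        * ((starRingEnd ℂ) c * sgn (f (genρ v u x)))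
      = c' * sgn (f (genρ v u x + a) + f (genρ v u x) + lin b (genρ v u x))
    rw [sgn_add, sgn_add]
    calc c * sgn (f (genρ v u x + a)) * (c' * sgn (lin b (genρ v u x)))
          * ((starRingEnd ℂ) c * sgn (f (genρ v u x)))
        = (c * (starRingEnd ℂ) c) * (c' *
            (sgn (f (genρ v u x + a)) * sgn (f (genρ v u x)) * sgn (lin b (genρ v u x)))) := by
          ring
      _ = _ := by rw [abs_of_pow4 hc, one_mul]

/-! ### Degrees of functions on the cube -/

section Deg

variable {α : Type*} [AddCommGroup α]

def degLE : ℕ → (QState n → α) → Prop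
  | 0, φ => ∀ y z, φ y = φ z
  | (k+1), φ => ∀ a, degLE k (fun y => φ (y + a) - φ y)

lemma z01 : ((0:ZMod 2) = 1) ↔ False := by decide

lemma z11 : ((1:ZMod 2) = 1) ↔ True := by decide

lemma degLE_congr {k : ℕ} {φ ψ : QState n → α} (h : ∀ y, φ y = ψ y) (hφ : degLE k φ) :
    degLE k ψ := by
  have : φ = ψ := funext h
  rwa [this] at hφ

lemma degLE_mono {k : ℕ} {φ : QState n → α} (h : degLE k φ) : degLE (k+1) φ := by
  induction k generalizing φ with
  | zero =>
    intro a y z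
    show φ (y + a) - φ y = φ (z + a) - φ z
    rw [h (y + a) (z + a), h y z]
  | succ k IH =>
    intro a
    exact IH (h a)

lemma degLE_le {k m : ℕ} (hkm : k ≤ m) {φ : QState n → α} (h : degLE k φ) : degLE m φ := by
  induction hkm with
  | refl => exact h
  | step _ IH => exact degLE_mono IH

lemma degLE_const {k : ℕ} : ∀ (c : α), degLE (n := n) k (fun _ => c) := by
  induction k with
  | zero => intro c y z; rfl
  | succ k IH =>
    intro c a
    exact degLE_congr (fun y => rfl) (IH (c - c))

lemma degLE_add {k : ℕ} {φ ψ : QState n → α} (hφ : degLE k φ) (hψ : degLE k ψ) :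
    degLE k (fun y => φ y + ψ y) := by
  induction k generalizing φ ψ with
  | zero => intro y z; show φ y + ψ y = φ z + ψ z; rw [hφ y z, hψ y z]
  | succ k IH =>
    intro a
    apply degLE_congr _ (IH (hφ a) (hψ a))
    intro y
    show (φ (y + a) - φ y) + (ψ (y + a) - ψ y) = _
    exact (add_sub_add_comm _ _ _ _).symm

lemma degLE_shift {k : ℕ} (v : QState n) {φ : QState n → α} (h : degLE k φ) :
    degLE k (fun y => φ (y + v)) := by
  induction k generalizing φ with
  | zero => intro y z; exact h _ _
  | succ k IH =>
    intro a
    apply degLE_congr _ (IH (h a))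
    intro y
    show φ (y + v + a) - φ (y + v) = φ (y + a + v) - φ (y + v)
    rw [add_right_comm]

def depOn (S : Finset (Fin n)) (φ : QState n → α) : Prop :=
  ∀ y z, (∀ i ∈ S, y i = z i) → φ y = φ z

lemma neg_eq_self_of_char2 (h2 : ∀ x : α, x + x = 0) (x : α) : -x = x :=
  neg_eq_of_add_eq_zero_left (h2 x)

lemma degLE_ite (h2 : ∀ x : α, x + x = 0) (i : Fin n) :
    ∀ (k : ℕ) (g : QState n → α), degLE k g →
      degLE (k+1) (fun y => if y i = 1 then g y else 0) := by
  intro k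
  induction k with
  | zero =>
    intro g hg a
    rcases z2 (a i) with ha | ha
    · intro y z
      show (if (y+a) i = 1 then g (y+a) else 0) - (if y i = 1 then g y else 0)
         = (if (z+a) i = 1 then g (z+a) else 0) - (if z i = 1 then g z else 0)
      have hy : (y+a) i = y i := by show y i + a i = y i; rw [ha, add_zero]
      have hz : (z+a) i = z i := by show z i + a i = z i; rw [ha, add_zero]
      rw [hy, hz]
      rcases z2 (y i) with h|h <;> rcases z2 (z i) with h'|h' <;>
        simp [h, h', z01, z11, hg (y+a) y, hg (z+a) z, hg y z]
    · intro y z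
      show (if (y+a) i = 1 then g (y+a) else 0) - (if y i = 1 then g y else 0)
         = (if (z+a) i = 1 then g (z+a) else 0) - (if z i = 1 then g z else 0)
      have hy : (y+a) i = y i + 1 := by show y i + a i = y i + 1; rw [ha]
      have hz : (z+a) i = z i + 1 := by show z i + a i = z i + 1; rw [ha]
      rw [hy, hz]
      rcases z2 (y i) with h|h <;> rcases z2 (z i) with h'|h' <;>
        simp [h, h', z01, z11, show (0:ZMod 2) + 1 = 1 from rfl,
          show (1:ZMod 2) + 1 = 0 by decide, zero_sub, sub_zero,
          neg_eq_self_of_char2 h2, hg (y+a) y, hg (z+a) z, hg y z]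
  | succ k IH =>
    intro g hg a
    rcases z2 (a i) with ha | ha
    · apply degLE_congr (φ := fun y => if y i = 1 then g (y+a) - g y else 0)
      · intro y
        have hya : (y + a) i = y i := by show y i + a i = _; rw [ha, add_zero]
        show (if y i = 1 then g (y+a) - g y else 0)
           = (if (y+a) i = 1 then g (y+a) else 0) - (if y i = 1 then g y else 0)
        rw [hya]
        rcases z2 (y i) with h|h <;> simp [h, z01, z11]
      · exact IH (fun y => g (y+a) - g y) (hg a)
    · apply degLE_congr
        (φ := fun y => g (y + a) + (if y i = 1 then (g (y+a) - g y) else 0))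
      · intro y
        have hya : (y + a) i = y i + 1 := by show y i + a i = _; rw [ha]
        show g (y + a) + (if y i = 1 then (g (y+a) - g y) else 0)
           = (if (y+a) i = 1 then g (y+a) else 0) - (if y i = 1 then g y else 0)
        rw [hya]
        rcases z2 (y i) with h|h
        · simp [h, z01, z11, show (0:ZMod 2) + 1 = 1 from rfl]
        · simp only [h, z11, if_true, show (1:ZMod 2) + 1 = 0 by decide, z01, if_false]
          rw [show g (y+a) + (g (y+a) - g y) = (g (y+a) + g (y+a)) - g y by abel,
            h2 (g (y+a))]
      · exact degLE_add (degLE_shift a hg) (IH (fun y => g (y+a) - g y) (hg a))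

lemma depOn_degLE (h2 : ∀ x : α, x + x = 0) (S : Finset (Fin n)) :
    ∀ (φ : QState n → α), depOn S φ → degLE S.card φ := by
  induction S using Finset.induction_on with
  | empty =>
    intro φ h
    intro y z
    exact h y z (fun i hi => absurd hi (by simp))
  | @insert i S his IH =>
    intro φ hφ
    have hh : depOn S (fun y => φ (Function.update y i 0)) := by
      intro y z hyz
      have : ∀ j ∈ insert i S, Function.update y i 0 j = Function.update z i 0 j := by
        intro j hj
        by_cases hji : j = i
        · subst hji; simp
        · rw [Function.update_of_ne hji, Function.update_of_ne hji]
          exact hyz j (by rcases Finset.mem_insert.mp hj with h|h; exact absurd h hji; exact h)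
      exact hφ _ _ this
    have hg : depOn S (fun y => φ (Function.update y i 1) - φ (Function.update y i 0)) := by
      intro y z hyz
      have h1 : ∀ j ∈ insert i S, Function.update y i 1 j = Function.update z i 1 j := by
        intro j hj
        by_cases hji : j = i
        · subst hji; simp
        · rw [Function.update_of_ne hji, Function.update_of_ne hji]
          exact hyz j (by rcases Finset.mem_insert.mp hj with h|h; exact absurd h hji; exact h)
      have e1 : φ (Function.update y i 1) = φ (Function.update z i 1) := hφ _ _ h1
      have e0 : φ (Function.update y i 0) = φ (Function.update z i 0) := hh y z hyz
      show φ (Function.update y i 1) - φ (Function.update y i 0)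
         = φ (Function.update z i 1) - φ (Function.update z i 0)
      rw [e1, e0]
    have key : ∀ y, φ y = φ (Function.update y i 0)
        + (if y i = 1 then φ (Function.update y i 1) - φ (Function.update y i 0) else 0) := by
      intro y
      rcases z2 (y i) with h | h
      · rw [if_neg (by rw [h]; exact fun hh => (z01.mp hh))]
        rw [← h, Function.update_eq_self, add_zero]
      · rw [if_pos h, ← h]
        rw [Function.update_eq_self]
        abel
    rw [Finset.card_insert_of_notMem his]
    apply degLE_congr (fun y => (key y).symm)
    exact degLE_add (degLE_mono (IH _ hh)) (degLE_ite h2 i S.card _ (IH _ hg))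

lemma degLE_top (h2 : ∀ x : α, x + x = 0) (φ : QState n → α) : degLE n φ := by
  have := depOn_degLE h2 Finset.univ φ (fun y z h => by
    have : y = z := funext fun i => h i (Finset.mem_univ i)
    rw [this])
  simpa [Finset.card_univ] using this

end Deg

lemma degLE_lin (b : QState n) : degLE 1 (fun y => lin b y) := by
  intro a y z
  show lin b (y + a) - lin b y = lin b (z + a) - lin b z
  rw [lin_add, lin_add]
  abel

def unitv (i : Fin n) : QState n := Function.update 0 i 1

lemma affine_rep {f : QState n → ZMod 2} (hf : degLE 1 f) :
    ∀ y, f y = f 0 + lin (fun i => f (unitv i) - f 0) y := by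
  have key : ∀ (a y z : QState n), f (y + a) - f y = f (z + a) - f z := fun a => hf a
  have main : ∀ (s : Finset (Fin n)) (y : QState n), (∀ j, j ∉ s → y j = 0) →
      f y = f 0 + ∑ i ∈ s, y i * (f (unitv i) - f 0) := by
    intro s
    induction s using Finset.induction_on with
    | empty =>
      intro y hy
      have : y = 0 := funext fun j => hy j (by simp)
      rw [this]; simp
    | @insert i s his IH =>
      intro y hy
      have hy' : ∀ j, j ∉ s → Function.update y i 0 j = 0 := by
        intro j hj
        by_cases hji : j = i
        · subst hji; simp
        · rw [Function.update_of_ne hji]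
          exact hy j (by simp [hji, hj])
      have IH' := IH (Function.update y i 0) hy'
      have hsum : ∑ j ∈ s, Function.update y i 0 j * (f (unitv j) - f 0)
          = ∑ j ∈ s, y j * (f (unitv j) - f 0) := by
        apply Finset.sum_congr rfl
        intro j hj
        rw [Function.update_of_ne (fun h => his (by rw [← h]; exact hj))]
      rw [hsum] at IH'
      rcases z2 (y i) with h0 | h1
      · have hupd : Function.update y i 0 = y := by rw [← h0, Function.update_eq_self]
        rw [hupd] at IH'
        rw [IH', Finset.sum_insert his, h0, zero_mul, zero_add]
      · have hdecomp : y = Function.update y i 0 + unitv i := by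
          funext j
          by_cases hji : j = i
          · subst hji
            simp [Pi.add_apply, unitv, h1]
          · show y j = Function.update y i 0 j + unitv i j
            rw [Function.update_of_ne hji, unitv, Function.update_of_ne hji]
            simp
        have hstep := key (unitv i) (Function.update y i 0) 0
        rw [zero_add] at hstep
        have : f y = f (Function.update y i 0) + (f (unitv i) - f 0) := by
          rw [← hstep, ← hdecomp]
          abel
        rw [this, IH', Finset.sum_insert his, h1, one_mul]
        abel
  intro y
  have := main Finset.univ y (fun j hj => absurd (Finset.mem_univ j) hj)
  rw [this]
  congr 1
  rw [lin]
  exact Finset.sum_congr rfl (fun i _ => mul_comm _ _)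

lemma Adm_zero : Adm (∅ : Finset (Fin n)) (fun _ => (0 : QState n)) :=
  ⟨fun _ _ _ => rfl, fun _ _ _ => rfl⟩

lemma gen_pauli {c : ℂ} {v : QState n} {f : QState n → ZMod 2}
    (hc : c ^ 4 = 1) (hf : degLE 1 f) : Gen c v (fun _ => 0) f ∈ Pauli n := by
  refine ⟨c * sgn (f 0), v, fun i => f (unitv i) - f 0, by
    rw [mul_pow, hc, sgn_pow4, one_mul], ?_⟩
  rw [pex_eq, PX, Gen]
  apply Mono_congr
  · intro y; rw [add_zero]
  · intro y
    rw [affine_rep hf y, sgn_add]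
    ring

lemma gen_CH_zero_u : ∀ (j : ℕ) (c : ℂ) (v : QState n) (f : QState n → ZMod 2),
    c ^ 4 = 1 → degLE (j+1) f → Gen c v (fun _ => 0) f ∈ CH n (j+2) := by
  intro j
  induction j with
  | zero =>
    intro c v f hc hf
    exact pauli_CH 1 _ (gen_pauli hc hf)
  | succ j IH =>
    intro c v f hc hf
    rw [CH_two_unfold]
    refine ⟨gen_unitary Adm_zero v f hc, ?_⟩
    intro P hP
    obtain ⟨c', a, b, hc', rfl⟩ := pauli_PX hP
    rw [gen_conj Adm_zero hc v f c' a b]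
    have hg : Gen c' a (fun x => (0:QState n) + 0)
        (fun x => f (genρ v (fun _ => 0) x + a) + f (genρ v (fun _ => 0) x)
          + lin b (genρ v (fun _ => 0) x))
        = Gen c' a (fun _ => (0:QState n))
        (fun x => ((f ((x + v) + a) - f (x + v)) + lin b (x + v))) := by
      apply Gen_congr
      · intro y; rw [add_zero]
      · intro x
        have hρ : genρ v (fun _ => (0:QState n)) x = x + v := by
          show x + v + 0 = x + v
          rw [add_zero]
        rw [hρ, z2sub (f (x + v + a)) (f (x+v))]
    rw [hg]
    apply IH c' a _ hc'
    exact degLE_add (degLE_shift v (hf a)) (degLE_shift v (degLE_le (by omega) (degLE_lin b)))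

lemma gen_CH {A : Finset (Fin n)} :
    ∀ (k : ℕ) (u : QState n → QState n), Adm A u → degLE k u →
      ∀ (c : ℂ) (v : QState n) (f : QState n → ZMod 2), c ^ 4 = 1 →
        Gen c v u f ∈ CH n (n + 2 + k) := by
  intro k
  induction k with
  | zero =>
    intro u h hdeg c v f hc
    have hg : Gen c v u f = Gen c (v + u 0) (fun _ => 0) f := by
      rw [Gen, Gen]
      apply Mono_congr _ (fun y => rfl)
      intro y
      rw [hdeg y 0, add_zero, add_assoc]
    rw [hg]
    have := gen_CH_zero_u n c (v + u 0) f hc (degLE_mono (degLE_top z2_add_self f))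
    simpa using this
  | succ k IH =>
    intro u h hdeg c v f hc
    rw [show n + 2 + (k + 1) = (n + 1 + k) + 2 by ring, CH_two_unfold]
    refine ⟨gen_unitary h v f hc, ?_⟩
    intro P hP
    obtain ⟨c', a, b, hc', rfl⟩ := pauli_PX hP
    rw [gen_conj h hc v f c' a b]
    have hmem := IH (fun x => u (x + v) + u (x + v + a))
      ⟨fun y i hi => by
        show (u (y + v) + u (y + v + a)) i = 0
        rw [Pi.add_apply, h.1 _ i hi, h.1 _ i hi, add_zero],
       fun y z hyz => by
        show u (y + v) + u (y + v + a) = u (z + v) + u (z + v + a)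
        rw [h.2 (y + v) (z + v) (fun i hi => by
            simp only [Pi.add_apply, hyz i hi]),
          h.2 (y + v + a) (z + v + a) (fun i hi => by
            simp only [Pi.add_apply, hyz i hi])]⟩
      (degLE_congr (fun x => by
        show u ((x + v) + a) - u (x + v) = u (x + v) + u (x + v + a)
        rw [qsub]
        exact add_comm _ _) (degLE_shift v (hdeg a)))
      c' a (fun x => f (genρ v u x + a) + f (genρ v u x) + lin b (genρ v u x)) hc'
    have harith : n + 2 + k = n + 1 + k + 1 := by ring
    rwa [harith] at hmem

lemma InCH_gen {A : Finset (Fin n)} {u : QState n → QState n} (h : Adm A u)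
    {c : ℂ} (v : QState n) (f : QState n → ZMod 2) (hc : c ^ 4 = 1) :
    InCH (Gen c v u f) :=
  ⟨n + 2 + n, gen_CH n u h (degLE_top qself u) c v f hc⟩

/-! ### Clifford conjugation preserves CH levels -/

lemma CH_conj {C : QMat n} (hC : C ∈ Matrix.unitaryGroup (QState n) ℂ)
    (h1 : ∀ p ∈ Pauli n, C * p * star C ∈ Pauli n)
    (h2 : ∀ p ∈ Pauli n, star C * p * C ∈ Pauli n) :
    ∀ (k : ℕ) (U : QMat n), U ∈ CH n k → C * U * star C ∈ CH n k := by
  intro k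
  induction k with
  | zero =>
    intro U hU
    have hU1 : U = 1 := hU
    rw [hU1, mul_one]
    show C * star C ∈ ({1} : Set (QMat n))
    rw [hC.2]
    rfl
  | succ k IH =>
    match k, IH with
    | 0, _ =>
      intro U hU
      exact h1 U hU
    | (k+1), IH =>
      intro U hU
      rw [CH_two_unfold] at hU ⊢
      obtain ⟨hUu, hUc⟩ := hU
      constructor
      · exact mul_mem (mul_mem hC hUu) (Unitary.star_mem hC)
      · intro P hP
        have hstar : star (C * U * star C) = C * star U * star C := by
          rw [star_mul, star_mul, star_star, mul_assoc]
        rw [hstar]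
        have e : C * U * star C * P * (C * star U * star C)
            = C * (U * (star C * P * C) * star U) * star C := by
          simp only [mul_assoc]
        rw [e]
        exact IH _ (hUc _ (h2 P hP))

/-! ### Hadamard matrices -/

def rr : ℂ := (((Real.sqrt 2 : ℝ) : ℂ))⁻¹

lemma rr_sq : rr * rr = (2:ℂ)⁻¹ := by
  rw [rr, ← mul_inv, ← Complex.ofReal_mul, Real.mul_self_sqrt (by norm_num : (0:ℝ) ≤ 2)]
  norm_num

lemma conj_rr : (starRingEnd ℂ) rr = rr := by
  rw [rr, map_inv₀, Complex.conj_ofReal]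

lemma Hmat_apply (T : Finset (Fin n)) (x y : QState n) :
    Hmat T x y = if (∀ i, i ∉ T → x i = y i)
      then (∏ i ∈ T, sgn (x i * y i)) * rr ^ T.card else 0 := rfl

lemma Hmat_single_apply (i : Fin n) (x y : QState n) :
    Hmat {i} x y = if (∀ j, j ≠ i → x j = y j) then sgn (x i * y i) * rr else 0 := by
  rw [Hmat_apply]
  have hc : (∀ j, j ∉ ({i} : Finset (Fin n)) → x j = y j) ↔ (∀ j, j ≠ i → x j = y j) := by
    constructor
    · intro h j hj; exact h j (by simp [hj])
    · intro h j hj; exact h j (by simpa using hj)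
  rw [if_congr hc rfl rfl]
  simp

/-- Sum over states agreeing with `x` off `i` collapses to two terms. -/
lemma sum_flip (i : Fin n) (x : QState n) (F : QState n → ℂ) :
    ∑ y : QState n, (if (∀ j, j ≠ i → x j = y j) then F y else 0)
      = F (Function.update x i 0) + F (Function.update x i 1) := by
  have hne : Function.update x i 0 ≠ Function.update x i 1 := by
    intro h
    have := congrFun h i
    rw [Function.update_self, Function.update_self] at this
    exact (by decide : (0:ZMod 2) ≠ 1) this
  have hvan : ∀ y ∈ Finset.univ, y ∉ ({Function.update x i 0, Function.update x i 1} :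
      Finset (QState n)) → (if (∀ j, j ≠ i → x j = y j) then F y else 0) = 0 := by
    intro y _ hy
    apply if_neg
    intro hc
    apply hy
    have : y = Function.update x i (y i) := by
      funext j
      by_cases hji : j = i
      · subst hji; rw [Function.update_self]
      · rw [Function.update_of_ne hji]; exact (hc j hji).symm
    rcases z2 (y i) with h | h
    · rw [h] at this; simp [this]
    · rw [h] at this; simp [this]
  rw [← Finset.sum_subset (Finset.subset_univ _) hvan, Finset.sum_pair hne]
  have h0 : (∀ j, j ≠ i → x j = Function.update x i (0:ZMod 2) j) :=
    fun j hj => (Function.update_of_ne hj _ _).symm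
  have h1 : (∀ j, j ≠ i → x j = Function.update x i (1:ZMod 2) j) :=
    fun j hj => (Function.update_of_ne hj _ _).symm
  rw [if_pos h0, if_pos h1]

/-- Mirrored version: condition `y j = z j` off `i`. -/
lemma sum_flip' (i : Fin n) (z : QState n) (F : QState n → ℂ) :
    ∑ y : QState n, (if (∀ j, j ≠ i → y j = z j) then F y else 0)
      = F (Function.update z i 0) + F (Function.update z i 1) := by
  have := sum_flip i z F
  rw [← this]
  apply Finset.sum_congr rfl
  intro y _
  apply if_congr _ rfl rfl
  constructor
  · intro h j hj; exact (h j hj).symm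
  · intro h j hj; exact (h j hj).symm

lemma Hmat_empty : Hmat (∅ : Finset (Fin n)) = 1 := by
  ext x y
  rw [Hmat_apply, Matrix.one_apply]
  by_cases h : x = y
  · subst h
    rw [if_pos (fun i _ => rfl), if_pos rfl]
    simp
  · rw [if_neg (fun hc => h (funext fun i => hc i (by simp))), if_neg h]

lemma Hmat_insert {i : Fin n} {T : Finset (Fin n)} (hi : i ∉ T) :
    Hmat (insert i T) = Hmat {i} * Hmat T := by
  ext x z
  rw [Matrix.mul_apply]
  have hsummand : ∀ y, Hmat {i} x y * Hmat T y z
      = (if (∀ j, j ≠ i → x j = y j)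
          then (fun y => sgn (x i * y i) * rr * Hmat T y z) y else 0) := by
    intro y
    rw [Hmat_single_apply, ite_mul, zero_mul]
  rw [Finset.sum_congr rfl (fun y _ => hsummand y), sum_flip]
  have hHT : ∀ b : ZMod 2, Hmat T (Function.update x i b) z
      = if (b = z i ∧ ∀ j, j ∉ T → j ≠ i → x j = z j)
        then (∏ j ∈ T, sgn (x j * z j)) * rr ^ T.card else 0 := by
    intro b
    rw [Hmat_apply]
    by_cases hb : b = z i ∧ ∀ j, j ∉ T → j ≠ i → x j = z j
    · rw [if_pos hb, if_pos, Finset.prod_congr rfl (fun j hj => by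
        rw [Function.update_of_ne (fun h => hi (by rw [← h]; exact hj))])]
      intro j hj
      by_cases hji : j = i
      · subst hji; rw [Function.update_self]; exact hb.1
      · rw [Function.update_of_ne hji]; exact hb.2 j hj hji
    · rw [if_neg hb, if_neg]
      intro hc
      apply hb
      refine ⟨by rw [← hc i hi, Function.update_self], fun j hj hji => ?_⟩
      rw [← hc j hj, Function.update_of_ne hji]
  have hcond : (∀ j, j ∉ insert i T → x j = z j) ↔ (∀ j, j ∉ T → j ≠ i → x j = z j) := by
    constructor
    · intro h j hj hji; exact h j (by simp [hj, hji])
    · intro h j hj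
      rw [Finset.mem_insert] at hj
      push_neg at hj
      exact h j hj.2 hj.1
  have hval : (∏ j ∈ insert i T, sgn (x j * z j)) * rr ^ (insert i T).card
      = sgn (x i * z i) * ((∏ j ∈ T, sgn (x j * z j)) * rr ^ T.card) * rr := by
    rw [Finset.prod_insert hi, Finset.card_insert_of_notMem hi, pow_succ]
    ring
  simp only [Function.update_self]
  rw [hHT 0, hHT 1, Hmat_apply]
  simp only [hcond]
  set C := ∀ j ∉ T, j ≠ i → x j = z j with hCdef
  set P := (∏ j ∈ T, sgn (x j * z j)) * rr ^ T.card with hPdef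
  by_cases hC : C
  · rcases z2 (z i) with hz | hz
    · have e0 : (if (0:ZMod 2) = z i ∧ C then P else 0) = P := if_pos ⟨hz.symm, hC⟩
      have e1 : (if (1:ZMod 2) = z i ∧ C then P else 0) = 0 :=
        if_neg (fun hfoo => (by decide : ¬ ((1:ZMod 2) = 0)) (hfoo.1.trans hz))
      rw [hz] at hval
      rw [e0, e1, if_pos hC, hval, mul_zero, sgn_zero]
      ring
    · have e0 : (if (0:ZMod 2) = z i ∧ C then P else 0) = 0 :=
        if_neg (fun hfoo => (by decide : ¬ ((0:ZMod 2) = 1)) (hfoo.1.trans hz))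
      have e1 : (if (1:ZMod 2) = z i ∧ C then P else 0) = P := if_pos ⟨hz.symm, hC⟩
      rw [hz] at hval
      rw [e0, e1, if_pos hC, hval, mul_one]
      ring
  · have e0 : (if (0:ZMod 2) = z i ∧ C then P else 0) = 0 := if_neg (fun hfoo => hC hfoo.2)
    have e1 : (if (1:ZMod 2) = z i ∧ C then P else 0) = 0 := if_neg (fun hfoo => hC hfoo.2)
    rw [e0, e1, if_neg hC]
    ring
lemma Hmat_mul_single {i : Fin n} {T : Finset (Fin n)} (hi : i ∉ T) :
    Hmat T * Hmat {i} = Hmat (insert i T) := by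
  ext x z
  rw [Matrix.mul_apply]
  have hsummand : ∀ y, Hmat T x y * Hmat {i} y z
      = (if (∀ j, j ≠ i → y j = z j)
          then (fun y => Hmat T x y * (sgn (y i * z i) * rr)) y else 0) := by
    intro y
    rw [Hmat_single_apply, mul_ite, mul_zero]
  rw [Finset.sum_congr rfl (fun y _ => hsummand y), sum_flip']
  have hHT : ∀ b : ZMod 2, Hmat T x (Function.update z i b)
      = if (x i = b ∧ ∀ j, j ∉ T → j ≠ i → x j = z j)
        then (∏ j ∈ T, sgn (x j * z j)) * rr ^ T.card else 0 := by
    intro b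
    rw [Hmat_apply]
    by_cases hb : x i = b ∧ ∀ j, j ∉ T → j ≠ i → x j = z j
    · rw [if_pos hb, if_pos, Finset.prod_congr rfl (fun j hj => by
        rw [Function.update_of_ne (fun h => hi (by rw [← h]; exact hj))])]
      intro j hj
      by_cases hji : j = i
      · subst hji; rw [Function.update_self]; exact hb.1
      · rw [Function.update_of_ne hji]; exact hb.2 j hj hji
    · rw [if_neg hb, if_neg]
      intro hc
      apply hb
      refine ⟨by rw [hc i hi, Function.update_self], fun j hj hji => ?_⟩
      rw [hc j hj, Function.update_of_ne hji]
  simp only [Function.update_self]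
  rw [hHT 0, hHT 1, Hmat_apply]
  have hcond : (∀ j, j ∉ insert i T → x j = z j) ↔ (∀ j, j ∉ T → j ≠ i → x j = z j) := by
    constructor
    · intro h j hj hji; exact h j (by simp [hj, hji])
    · intro h j hj
      rw [Finset.mem_insert] at hj
      push_neg at hj
      exact h j hj.2 hj.1
  have hval : (∏ j ∈ insert i T, sgn (x j * z j)) * rr ^ (insert i T).card
      = sgn (x i * z i) * ((∏ j ∈ T, sgn (x j * z j)) * rr ^ T.card) * rr := by
    rw [Finset.prod_insert hi, Finset.card_insert_of_notMem hi, pow_succ]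
    ring
  simp only [hcond]
  set C := ∀ j ∉ T, j ≠ i → x j = z j with hCdef
  set P := (∏ j ∈ T, sgn (x j * z j)) * rr ^ T.card with hPdef
  by_cases hC : C
  · rcases z2 (x i) with hx | hx
    · have e0 : (if x i = (0:ZMod 2) ∧ C then P else 0) = P := if_pos ⟨hx, hC⟩
      have e1 : (if x i = (1:ZMod 2) ∧ C then P else 0) = 0 :=
        if_neg (fun hfoo => (by decide : ¬ ((0:ZMod 2) = 1)) (hx.symm.trans hfoo.1))
      rw [hx] at hval
      rw [e0, e1, if_pos hC, hval, zero_mul, zero_mul, sgn_zero]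
      ring
    · have e0 : (if x i = (0:ZMod 2) ∧ C then P else 0) = 0 :=
        if_neg (fun hfoo => (by decide : ¬ ((1:ZMod 2) = 0)) (hx.symm.trans hfoo.1))
      have e1 : (if x i = (1:ZMod 2) ∧ C then P else 0) = P := if_pos ⟨hx, hC⟩
      rw [hx] at hval
      rw [e0, e1, if_pos hC, hval, one_mul]
      ring
  · have e0 : (if x i = (0:ZMod 2) ∧ C then P else 0) = 0 := if_neg (fun hfoo => hC hfoo.2)
    have e1 : (if x i = (1:ZMod 2) ∧ C then P else 0) = 0 := if_neg (fun hfoo => hC hfoo.2)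
    rw [e0, e1, if_neg hC]
    ring

lemma HT_comm_single {i : Fin n} {T : Finset (Fin n)} (hi : i ∉ T) :
    Hmat T * Hmat {i} = Hmat {i} * Hmat T := by
  rw [Hmat_mul_single hi, Hmat_insert hi]

lemma Hmat_single_sq (i : Fin n) : Hmat {i} * Hmat {i} = 1 := by
  ext x z
  rw [Matrix.mul_apply]
  have hsummand : ∀ y, Hmat {i} x y * Hmat {i} y z
      = (if (∀ j, j ≠ i → x j = y j)
          then (fun y => sgn (x i * y i) * rr * Hmat {i} y z) y else 0) := by
    intro y
    rw [Hmat_single_apply, ite_mul, zero_mul]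
  rw [Finset.sum_congr rfl (fun y _ => hsummand y), sum_flip]
  simp only [Function.update_self]
  have hH : ∀ b : ZMod 2, Hmat {i} (Function.update x i b) z
      = if (∀ j, j ≠ i → x j = z j) then sgn (b * z i) * rr else 0 := by
    intro b
    rw [Hmat_single_apply]
    by_cases hcc : ∀ j, j ≠ i → x j = z j
    · rw [if_pos (fun j hj => by rw [Function.update_of_ne hj]; exact hcc j hj),
        if_pos hcc, Function.update_self]
    · rw [if_neg, if_neg hcc]
      intro hc
      apply hcc
      intro j hj
      exact ((Function.update_of_ne hj b x).symm).trans (hc j hj)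
  rw [hH 0, hH 1, Matrix.one_apply]
  by_cases hcc : ∀ j, j ≠ i → x j = z j
  · rw [if_pos hcc, if_pos hcc]
    rcases z2 (x i) with hx | hx <;> rcases z2 (z i) with hzz | hzz
    · have hxz : x = z := funext fun j => by
        by_cases hj : j = i
        · subst hj; rw [hx, hzz]
        · exact hcc j hj
      rw [if_pos hxz, hx, hzz]
      simp only [mul_zero, zero_mul, mul_one, one_mul, sgn_zero, sgn_one]
      linear_combination (2:ℂ) * rr_sq
    · have hxz : x ≠ z := fun h =>
        (by decide : ¬ ((0:ZMod 2) = 1)) (hx.symm.trans (by rw [h]; exact hzz))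
      rw [if_neg hxz, hx, hzz]
      simp only [mul_zero, zero_mul, mul_one, one_mul, sgn_zero, sgn_one]
      ring
    · have hxz : x ≠ z := fun h =>
        (by decide : ¬ ((1:ZMod 2) = 0)) (hx.symm.trans (by rw [h]; exact hzz))
      rw [if_neg hxz, hx, hzz]
      simp only [mul_zero, zero_mul, mul_one, one_mul, sgn_zero, sgn_one]
      ring
    · have hxz : x = z := funext fun j => by
        by_cases hj : j = i
        · subst hj; rw [hx, hzz]
        · exact hcc j hj
      rw [if_pos hxz, hx, hzz]
      simp only [mul_zero, zero_mul, mul_one, one_mul, sgn_zero, sgn_one]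
      linear_combination (2:ℂ) * rr_sq
  · rw [if_neg hcc, if_neg hcc, if_neg (fun h : x = z => hcc (fun j _ => by rw [h]))]
    ring

lemma Hmat_sq (T : Finset (Fin n)) : Hmat T * Hmat T = 1 := by
  induction T using Finset.induction_on with
  | empty => rw [Hmat_empty, one_mul]
  | @insert i T hi IH =>
    rw [Hmat_insert hi]
    calc Hmat {i} * Hmat T * (Hmat {i} * Hmat T)
        = Hmat {i} * (Hmat T * Hmat {i}) * Hmat T := by
          simp only [mul_assoc]
      _ = Hmat {i} * (Hmat {i} * Hmat T) * Hmat T := by rw [HT_comm_single hi]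
      _ = (Hmat {i} * Hmat {i}) * (Hmat T * Hmat T) := by simp only [mul_assoc]
      _ = 1 := by rw [Hmat_single_sq, IH, one_mul]

lemma star_Hmat (T : Finset (Fin n)) : star (Hmat T) = Hmat T := by
  ext x y
  rw [Matrix.star_apply, Hmat_apply, Hmat_apply]
  by_cases h : ∀ i, i ∉ T → x i = y i
  · rw [if_pos (fun i hi => (h i hi).symm), if_pos h]
    rw [Complex.star_def, map_mul, map_pow, conj_rr, map_prod]
    rw [Finset.prod_congr rfl (fun j _ => by rw [conj_sgn, mul_comm (y j) (x j)])]
  · rw [if_neg (fun hc => h (fun i hi => (hc i hi).symm)), if_neg h, star_zero]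

lemma Hmat_unitary (T : Finset (Fin n)) : Hmat T ∈ Matrix.unitaryGroup (QState n) ℂ :=
  ⟨by rw [star_Hmat, Hmat_sq], by rw [star_Hmat, Hmat_sq]⟩

lemma mul_Mono (N : QMat n) (π : QState n → QState n) (d : QState n → ℂ) :
    N * Mono π d = Matrix.of (fun x z => N x (π z) * d z) := by
  ext x z
  rw [Matrix.mul_apply]
  simp only [Mono_apply, Matrix.of_apply, mul_ite, mul_zero]
  rw [Finset.sum_ite_eq' Finset.univ (π z) (fun y => N x y * d z)]
  simp

lemma Mono_perm_mul (φ : QState n → QState n) (hφ : ∀ y, φ (φ y) = y) (N : QMat n) :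
    Mono φ (fun _ => 1) * N = Matrix.of (fun x z => N (φ x) z) := by
  ext x z
  rw [Matrix.mul_apply]
  have hs : ∀ y, Mono φ (fun _ => 1) x y * N y z = if y = φ x then N y z else 0 := by
    intro y
    rw [Mono_apply]
    by_cases h : x = φ y
    · rw [if_pos h, if_pos (by rw [h, hφ]), one_mul]
    · rw [if_neg h, if_neg (fun hc => h (by rw [hc, hφ])), zero_mul]
  rw [Finset.sum_congr rfl (fun y _ => hs y),
    Finset.sum_ite_eq' Finset.univ (φ x) (fun y => N y z)]
  simp

lemma XStr_zero : XStr (0 : QState n) = 1 := by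
  ext x y
  rw [XStr_eq, Mono_apply, Matrix.one_apply, add_zero]

lemma Mono_id_diag (d : QState n → ℂ) : Mono id d = Matrix.diagonal d := by
  ext x y
  rw [Mono_apply, Matrix.diagonal_apply]
  simp only [id_eq]
  by_cases h : x = y
  · subst h; rfl
  · rw [if_neg h, if_neg h]
/-! ### Z2 numeral facts -/

lemma z2a00 : (0:ZMod 2) + 0 = 0 := by decide
lemma z2a01 : (0:ZMod 2) + 1 = 1 := by decide
lemma z2a10 : (1:ZMod 2) + 0 = 1 := by decide
lemma z2a11 : (1:ZMod 2) + 1 = 0 := by decide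
lemma z2s00 : (0:ZMod 2) - 0 = 0 := by decide
lemma z2s01 : (0:ZMod 2) - 1 = 1 := by decide
lemma z2s10 : (1:ZMod 2) - 0 = 1 := by decide
lemma z2s11 : (1:ZMod 2) - 1 = 0 := by decide
lemma z2m00 : (0:ZMod 2) * 0 = 0 := by decide
lemma z2m01 : (0:ZMod 2) * 1 = 0 := by decide
lemma z2m10 : (1:ZMod 2) * 0 = 0 := by decide
lemma z2m11 : (1:ZMod 2) * 1 = 1 := by decide

lemma sgn_pow_two (s : ZMod 2) : sgn s ^ 2 = 1 := by rw [pow_two, sgn_mul_self]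

lemma pow4_mul {x y : ℂ} (hx : x ^ 4 = 1) (hy : y ^ 4 = 1) : (x * y) ^ 4 = 1 := by
  rw [mul_pow, hx, hy, one_mul]

/-! ### mcx gate basics -/

lemma mcxFun_ne {t : Fin n} {S : Finset (Fin n)} {p : QState n} (y : QState n)
    {j : Fin n} (hj : j ≠ t) : mcxFun t S p y j = y j := by
  unfold mcxFun
  split_ifs
  · rw [Function.update_of_ne hj]
  · rfl

lemma mcxFun_t {t : Fin n} {S : Finset (Fin n)} {p : QState n} (y : QState n) :
    mcxFun t S p y t = y t + (if ∀ j ∈ S, y j = p j then 1 else 0) := by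
  unfold mcxFun
  split_ifs with h
  · rw [Function.update_self]
  · rw [add_zero]

lemma mcxFun_cond {t : Fin n} {S : Finset (Fin n)} {p : QState n} (htS : t ∉ S)
    {y y' : QState n} (h : ∀ j ∈ S, y j = y' j) :
    (∀ j ∈ S, y j = p j) ↔ (∀ j ∈ S, y' j = p j) := by
  constructor
  · intro hh j hjS; rw [← h j hjS]; exact hh j hjS
  · intro hh j hjS; rw [h j hjS]; exact hh j hjS

lemma mcxFun_invol {t : Fin n} {S : Finset (Fin n)} {p : QState n} (htS : t ∉ S)
    (y : QState n) : mcxFun t S p (mcxFun t S p y) = y := by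
  funext j
  by_cases hj : j = t
  · subst hj
    rw [mcxFun_t, mcxFun_t]
    have hc : (∀ i ∈ S, mcxFun j S p y i = p i) ↔ (∀ i ∈ S, y i = p i) :=
      mcxFun_cond htS (fun i hiS => mcxFun_ne y (fun h => htS (by rw [← h]; exact hiS)))
    rw [if_congr hc rfl rfl]
    rcases z2 (if ∀ i ∈ S, y i = p i then (1:ZMod 2) else 0) with h | h
    · rw [h, add_zero, add_zero]
    · rw [h, add_assoc, z2a11, add_zero]
  · rw [mcxFun_ne _ hj, mcxFun_ne _ hj]

lemma mcxMat_eq (t : Fin n) (S : Finset (Fin n)) (p : QState n) :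
    mcxMat t S p = Mono (mcxFun t S p) (fun _ => 1) := rfl

/-- Gates avoiding the wires T commute with the Hadamards on T. -/
lemma mcx_comm_HT {t : Fin n} {S : Finset (Fin n)} {p : QState n} {T : Finset (Fin n)}
    (htS : t ∉ S) (ht : t ∉ T) (hS : ∀ j ∈ S, j ∉ T) :
    Hmat T * mcxMat t S p = mcxMat t S p * Hmat T := by
  rw [mcxMat_eq, mul_Mono, Mono_perm_mul _ (mcxFun_invol htS)]
  ext x z
  show Hmat T x (mcxFun t S p z) * 1 = Hmat T (mcxFun t S p x) z
  rw [mul_one, Hmat_apply, Hmat_apply]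
  have hprod1 : (∏ j ∈ T, sgn (x j * mcxFun t S p z j)) = ∏ j ∈ T, sgn (x j * z j) :=
    Finset.prod_congr rfl (fun j hj => by
      rw [mcxFun_ne z (fun h => ht (by rw [← h]; exact hj))])
  have hprod2 : (∏ j ∈ T, sgn (mcxFun t S p x j * z j)) = ∏ j ∈ T, sgn (x j * z j) :=
    Finset.prod_congr rfl (fun j hj => by
      rw [mcxFun_ne x (fun h => ht (by rw [← h]; exact hj))])
  have hiff : (∀ i, i ∉ T → x i = mcxFun t S p z i) ↔ (∀ i, i ∉ T → mcxFun t S p x i = z i) := by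
    constructor
    · intro h i hiT
      by_cases hit : i = t
      · subst hit
        have hxt := h i ht
        rw [mcxFun_t] at hxt
        rw [mcxFun_t, hxt]
        have hc : (∀ j ∈ S, x j = p j) ↔ (∀ j ∈ S, z j = p j) :=
          mcxFun_cond htS (fun j hjS => by
            rw [h j (hS j hjS), mcxFun_ne z (fun hh => htS (by rw [← hh]; exact hjS))])
        rw [if_congr hc rfl rfl, add_assoc, z2_add_self, add_zero]
      · rw [mcxFun_ne x hit, h i hiT, mcxFun_ne z hit]
    · intro h i hiT
      by_cases hit : i = t
      · subst hit
        have hxt := h i ht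
        rw [mcxFun_t] at hxt
        rw [mcxFun_t]
        have hc : (∀ j ∈ S, z j = p j) ↔ (∀ j ∈ S, x j = p j) :=
          mcxFun_cond htS (fun j hjS => by
            rw [← h j (hS j hjS), mcxFun_ne x (fun hh => htS (by rw [← hh]; exact hjS))])
        rw [if_congr hc rfl rfl, ← hxt, add_assoc, z2_add_self, add_zero]
      · rw [mcxFun_ne z hit, ← h i hiT, mcxFun_ne x hit]
  by_cases h : ∀ i, i ∉ T → x i = mcxFun t S p z i
  · rw [if_pos h, if_pos (hiff.mp h), hprod1, hprod2]
  · rw [if_neg h, if_neg (fun hc => h (hiff.mpr hc))]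

lemma Hmat_single_update (i : Fin n) (w z : QState n) (c' : ZMod 2) :
    Hmat {i} (Function.update w i c') z
      = if (∀ j, j ≠ i → w j = z j) then sgn (c' * z i) * rr else 0 := by
  rw [Hmat_single_apply]
  by_cases hcc : ∀ j, j ≠ i → w j = z j
  · rw [if_pos (fun j hj => by rw [Function.update_of_ne hj]; exact hcc j hj),
      if_pos hcc, Function.update_self]
  · rw [if_neg, if_neg hcc]
    intro hc
    apply hcc
    intro j hj
    exact ((Function.update_of_ne hj c' w).symm).trans (hc j hj)
/-- Conjugating an mcx by Hadamard on its own target wire gives a diagonal ±1 gate. -/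
lemma single_conj_mcx {t : Fin n} {S : Finset (Fin n)} {p : QState n} (htS : t ∉ S) :
    Hmat {t} * mcxMat t S p * Hmat {t}
      = Mono id (fun z => sgn (if ∀ j ∈ S, z j = p j then z t else 0)) := by
  rw [mcxMat_eq, mul_assoc, Mono_perm_mul _ (mcxFun_invol htS)]
  ext x z
  rw [Matrix.mul_apply]
  have hs : ∀ y, Hmat {t} x y * (Matrix.of fun y z => Hmat {t} (mcxFun t S p y) z) y z
      = if (∀ j, j ≠ t → x j = y j)
          then (fun y => sgn (x t * y t) * rr * Hmat {t} (mcxFun t S p y) z) y else 0 := by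
    intro y
    rw [Matrix.of_apply, Hmat_single_apply, ite_mul, zero_mul]
  rw [Finset.sum_congr rfl (fun y _ => hs y), sum_flip]
  simp only [Function.update_self]
  have hφupd : ∀ s : ZMod 2, mcxFun t S p (Function.update x t s)
      = Function.update x t (s + (if ∀ j ∈ S, x j = p j then 1 else 0)) := by
    intro s
    funext j
    by_cases hj : j = t
    · subst hj
      rw [mcxFun_t, Function.update_self, Function.update_self]
      have hc : (∀ i ∈ S, Function.update x j s i = p i) ↔ (∀ i ∈ S, x i = p i) := by
        constructor
        · intro hh i hiS
          rw [← hh i hiS, Function.update_of_ne (fun h => htS (by rw [← h]; exact hiS))]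
        · intro hh i hiS
          rw [Function.update_of_ne (fun h => htS (by rw [← h]; exact hiS))]
          exact hh i hiS
      rw [if_congr hc rfl rfl]
    · rw [mcxFun_ne _ hj, Function.update_of_ne hj, Function.update_of_ne hj]
  rw [hφupd 0, hφupd 1, Hmat_single_update, Hmat_single_update, Mono_apply]
  simp only [id_eq]
  by_cases hcc : ∀ j, j ≠ t → x j = z j
  · have hχ : (∀ j ∈ S, x j = p j) ↔ (∀ j ∈ S, z j = p j) :=
      mcxFun_cond htS (fun j hjS => hcc j (fun h => htS (by rw [← h]; exact hjS)))
    rw [if_pos hcc, if_pos hcc]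
    by_cases hS' : ∀ j ∈ S, z j = p j
    · rw [if_pos (hχ.mpr hS'), if_pos hS']
      rcases z2 (x t) with hx | hx <;> rcases z2 (z t) with hz | hz
      · have hxz : x = z := funext fun j => by
          by_cases hj : j = t
          · subst hj; rw [hx, hz]
          · exact hcc j hj
        rw [if_pos hxz, hx, hz]
        simp only [z2a01, z2a11, z2m00, z2m01, z2m10, z2m11, zero_add, mul_zero, zero_mul,
          mul_one, one_mul, sgn_zero, sgn_one]
        first
        | ring1
        | linear_combination (2 : ℂ) * rr_sq
        | linear_combination (-2 : ℂ) * rr_sq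
      · have hxz : x ≠ z := fun h =>
          (by decide : ¬ ((0:ZMod 2) = 1)) (hx.symm.trans (by rw [h]; exact hz))
        rw [if_neg hxz, hx, hz]
        simp only [z2a01, z2a11, z2m00, z2m01, z2m10, z2m11, zero_add, mul_zero, zero_mul,
          mul_one, one_mul, sgn_zero, sgn_one]
        first
        | ring1
        | linear_combination (2 : ℂ) * rr_sq
        | linear_combination (-2 : ℂ) * rr_sq
      · have hxz : x ≠ z := fun h =>
          (by decide : ¬ ((1:ZMod 2) = 0)) (hx.symm.trans (by rw [h]; exact hz))
        rw [if_neg hxz, hx, hz]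
        simp only [z2a01, z2a11, z2m00, z2m01, z2m10, z2m11, zero_add, mul_zero, zero_mul,
          mul_one, one_mul, sgn_zero, sgn_one]
        first
        | ring1
        | linear_combination (2 : ℂ) * rr_sq
        | linear_combination (-2 : ℂ) * rr_sq
      · have hxz : x = z := funext fun j => by
          by_cases hj : j = t
          · subst hj; rw [hx, hz]
          · exact hcc j hj
        rw [if_pos hxz, hx, hz]
        simp only [z2a01, z2a11, z2m00, z2m01, z2m10, z2m11, zero_add, mul_zero, zero_mul,
          mul_one, one_mul, sgn_zero, sgn_one]
        first
        | ring1
        | linear_combination (2 : ℂ) * rr_sq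
        | linear_combination (-2 : ℂ) * rr_sq
    · rw [if_neg (fun hxx => hS' (hχ.mp hxx)), if_neg hS']
      rcases z2 (x t) with hx | hx <;> rcases z2 (z t) with hz | hz
      · have hxz : x = z := funext fun j => by
          by_cases hj : j = t
          · subst hj; rw [hx, hz]
          · exact hcc j hj
        rw [if_pos hxz, hx, hz]
        simp only [z2a00, z2a01, z2a10, z2a11, z2m00, z2m01, z2m10, z2m11, add_zero, zero_add,
          mul_zero, zero_mul, mul_one, one_mul, sgn_zero, sgn_one]
        first
        | ring1
        | linear_combination (2 : ℂ) * rr_sq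
        | linear_combination (-2 : ℂ) * rr_sq
      · have hxz : x ≠ z := fun h =>
          (by decide : ¬ ((0:ZMod 2) = 1)) (hx.symm.trans (by rw [h]; exact hz))
        rw [if_neg hxz, hx, hz]
        simp only [z2a00, z2a01, z2a10, z2a11, z2m00, z2m01, z2m10, z2m11, add_zero, zero_add,
          mul_zero, zero_mul, mul_one, one_mul, sgn_zero, sgn_one]
        first
        | ring1
        | linear_combination (2 : ℂ) * rr_sq
        | linear_combination (-2 : ℂ) * rr_sq
      · have hxz : x ≠ z := fun h =>
          (by decide : ¬ ((1:ZMod 2) = 0)) (hx.symm.trans (by rw [h]; exact hz))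
        rw [if_neg hxz, hx, hz]
        simp only [z2a00, z2a01, z2a10, z2a11, z2m00, z2m01, z2m10, z2m11, add_zero, zero_add,
          mul_zero, zero_mul, mul_one, one_mul, sgn_zero, sgn_one]
        first
        | ring1
        | linear_combination (2 : ℂ) * rr_sq
        | linear_combination (-2 : ℂ) * rr_sq
      · have hxz : x = z := funext fun j => by
          by_cases hj : j = t
          · subst hj; rw [hx, hz]
          · exact hcc j hj
        rw [if_pos hxz, hx, hz]
        simp only [z2a00, z2a01, z2a10, z2a11, z2m00, z2m01, z2m10, z2m11, add_zero, zero_add,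
          mul_zero, zero_mul, mul_one, one_mul, sgn_zero, sgn_one]
        first
        | ring1
        | linear_combination (2 : ℂ) * rr_sq
        | linear_combination (-2 : ℂ) * rr_sq
  · rw [if_neg hcc, if_neg hcc, if_neg (fun h : x = z => hcc (fun j _ => by rw [h]))]
    ring
/-- Conjugating an mcx with target in T (controls off T) by `Hmat T`. -/
lemma HT_conj_mcx {t : Fin n} {S : Finset (Fin n)} {p : QState n} {T : Finset (Fin n)}
    (htS : t ∉ S) (ht : t ∈ T) (hS : ∀ j ∈ S, j ∉ T) :
    Hmat T * mcxMat t S p * Hmat T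
      = Mono id (fun z => sgn (if ∀ j ∈ S, z j = p j then z t else 0)) := by
  have hT : T = insert t (T.erase t) := (Finset.insert_erase ht).symm
  have hte : t ∉ T.erase t := Finset.notMem_erase t T
  have hSe : ∀ j ∈ S, j ∉ T.erase t := fun j hj hje => hS j hj (Finset.mem_of_mem_erase hje)
  rw [hT, Hmat_insert hte]
  have hcomm := mcx_comm_HT (p := p) (T := T.erase t) htS hte hSe
  calc Hmat {t} * Hmat (T.erase t) * mcxMat t S p * (Hmat {t} * Hmat (T.erase t))
      = Hmat {t} * ((Hmat (T.erase t) * mcxMat t S p) * (Hmat {t} * Hmat (T.erase t))) := by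
        simp only [mul_assoc]
    _ = Hmat {t} * ((mcxMat t S p * Hmat (T.erase t)) * (Hmat {t} * Hmat (T.erase t))) := by
        rw [hcomm]
    _ = Hmat {t} * (mcxMat t S p * (Hmat (T.erase t) * Hmat {t} * Hmat (T.erase t))) := by
        simp only [mul_assoc]
    _ = Hmat {t} * (mcxMat t S p * (Hmat {t} * Hmat (T.erase t) * Hmat (T.erase t))) := by
        rw [HT_comm_single hte]
    _ = Hmat {t} * (mcxMat t S p * (Hmat {t} * (Hmat (T.erase t) * Hmat (T.erase t)))) := by
        simp only [mul_assoc]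
    _ = Hmat {t} * mcxMat t S p * Hmat {t} := by
        rw [Hmat_sq, mul_one, ← mul_assoc]
    _ = _ := single_conj_mcx htS

lemma upd_add (x a : QState n) (i : Fin n) (s : ZMod 2) :
    Function.update x i s + a = Function.update (x + a) i (s + a i) := by
  funext j
  by_cases hj : j = i
  · subst hj
    rw [Pi.add_apply, Function.update_self, Function.update_self]
  · rw [Pi.add_apply, Function.update_of_ne hj, Function.update_of_ne hj, Pi.add_apply]

lemma lin_update_right (b x : QState n) (i : Fin n) (s : ZMod 2) :
    lin b (Function.update x i s) = lin b x + b i * (s - x i) := by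
  have h1 : lin b (Function.update x i s)
      = (∑ j ∈ Finset.univ \ {i}, b j * x j) + b i * s := by
    rw [lin, Finset.sum_eq_sum_sdiff_singleton_add (Finset.mem_univ i), Function.update_self]
    congr 1
    apply Finset.sum_congr rfl
    intro j hj
    rw [Function.update_of_ne (by simpa using (Finset.mem_sdiff.mp hj).2)]
  have h2 : lin b x = (∑ j ∈ Finset.univ \ {i}, b j * x j) + b i * x i := by
    rw [lin, Finset.sum_eq_sum_sdiff_singleton_add (Finset.mem_univ i)]
  rw [h1, h2]
  ring

lemma lin_update_left (b x : QState n) (i : Fin n) (s : ZMod 2) :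
    lin (Function.update b i s) x = lin b x + (s - b i) * x i := by
  have h1 : lin (Function.update b i s) x
      = (∑ j ∈ Finset.univ \ {i}, b j * x j) + s * x i := by
    rw [lin, Finset.sum_eq_sum_sdiff_singleton_add (Finset.mem_univ i), Function.update_self]
    congr 1
    apply Finset.sum_congr rfl
    intro j hj
    rw [Function.update_of_ne (by simpa using (Finset.mem_sdiff.mp hj).2)]
  have h2 : lin b x = (∑ j ∈ Finset.univ \ {i}, b j * x j) + b i * x i := by
    rw [lin, Finset.sum_eq_sum_sdiff_singleton_add (Finset.mem_univ i)]
  rw [h1, h2]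
  ring

/-- Single-wire Hadamard conjugation of a Pauli normal form. -/
lemma single_conj_PX (i : Fin n) (c : ℂ) (a b : QState n) :
    Hmat {i} * PX c a b * Hmat {i}
      = PX (c * sgn (lin b (Function.update a i (b i) + a) + b i))
          (Function.update a i (b i)) (Function.update b i (a i)) := by
  have hPXH : PX c a b * Hmat {i}
      = Matrix.of (fun x z => c * sgn (lin b (x + a)) * Hmat {i} (x + a) z) := by
    ext x z
    rw [PX, Matrix.mul_apply]
    have hs : ∀ y, Mono (fun y => y + a) (fun y => c * sgn (lin b y)) x y * Hmat {i} y z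
        = if y = x + a then (fun y => c * sgn (lin b y) * Hmat {i} y z) y else 0 := by
      intro y
      rw [Mono_apply]
      by_cases h : x = y + a
      · rw [if_pos h, if_pos (by rw [h, add_assoc, qself, add_zero])]
      · rw [if_neg h, if_neg (fun hc => h (by rw [hc, add_assoc, qself, add_zero])), zero_mul]
    rw [Finset.sum_congr rfl (fun y _ => hs y),
      Finset.sum_ite_eq' Finset.univ (x + a) (fun y => c * sgn (lin b y) * Hmat {i} y z)]
    simp
  rw [mul_assoc, hPXH]
  ext x z
  rw [Matrix.mul_apply]
  have hs : ∀ y, Hmat {i} x y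
        * (Matrix.of fun x z => c * sgn (lin b (x + a)) * Hmat {i} (x + a) z) y z
      = if (∀ j, j ≠ i → x j = y j)
        then (fun y => sgn (x i * y i) * rr * (c * sgn (lin b (y + a)) * Hmat {i} (y + a) z)) y
        else 0 := by
    intro y
    rw [Matrix.of_apply, Hmat_single_apply, ite_mul, zero_mul]
  rw [Finset.sum_congr rfl (fun y _ => hs y), sum_flip]
  simp only [Function.update_self]
  rw [upd_add x a i 0, upd_add x a i 1, lin_update_right b (x+a) i (0 + a i),
    lin_update_right b (x+a) i (1 + a i), Hmat_single_update, Hmat_single_update,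
    PX, Mono_apply]
  simp only [Pi.add_apply, Function.update_self]
  by_cases hcond : ∀ j, j ≠ i → x j + a j = z j
  · rw [if_pos hcond, if_pos hcond]
    have hxz : (x = z + Function.update a i (b i)) ↔ (x i = z i + b i) := by
      constructor
      · intro h
        have := congrFun h i
        rwa [Pi.add_apply, Function.update_self] at this
      · intro h
        funext j
        by_cases hj : j = i
        · subst hj
          rw [Pi.add_apply, Function.update_self]
          exact h
        · rw [Pi.add_apply, Function.update_of_ne hj]
          calc x j = x j + a j + a j := by rw [add_assoc, z2_add_self, add_zero]
            _ = z j + a j := by rw [hcond j hj]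
    set L := lin b (x + a) with hL
    set M := lin b (Function.update a i (b i) + a) with hM
    by_cases hxzi : x i = z i + b i
    · rw [if_pos (hxz.mpr hxzi)]
      have hx_eq : x = z + Function.update a i (b i) := hxz.mpr hxzi
      have hxa : x + a = z + (Function.update a i (b i) + a) := by
        rw [hx_eq, add_assoc]
      have hrel : lin (Function.update b i (a i)) z = L + M + (a i - b i) * z i := by
        rw [lin_update_left b z i (a i)]
        have hLz : L = lin b z + M := by
          rw [hL, hxa, lin_add, hM]
        rw [hLz]
        linear_combination (-1 : ZMod 2) * z2_add_self M
      have hfuse : c * sgn (M + b i) * sgn (lin (Function.update b i (a i)) z)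
          = c * sgn (L + (b i + (a i - b i) * z i)) := by
        rw [mul_assoc, ← sgn_add, hrel]
        congr 2
        linear_combination z2_add_self M
      rw [hfuse]
      rcases z2 (z i) with hz | hz <;> rcases z2 (a i) with ha | ha <;>
        rcases z2 (b i) with hb | hb <;>
        rw [hz, hb] at hxzi <;> rw [hz, ha, hb, hxzi] <;>
        simp only [z2a00, z2a01, z2a10, z2a11, z2s00, z2s01, z2s10, z2s11,
          z2m00, z2m01, z2m10, z2m11, add_zero, zero_add, mul_zero, zero_mul,
          mul_one, one_mul, sub_zero, sgn_add, sgn_zero, sgn_one] <;>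
        first
        | ring1
        | linear_combination (2 : ℂ) * c * sgn L * rr_sq
        | linear_combination (-2 : ℂ) * c * sgn L * rr_sq
    · rw [if_neg (fun hh => hxzi (hxz.mp hh))]
      have hxi : x i = z i + b i + 1 := by
        have : ∀ u w : ZMod 2, u ≠ w → u = w + 1 := by decide
        exact this _ _ hxzi
      rcases z2 (z i) with hz | hz <;> rcases z2 (a i) with ha | ha <;>
        rcases z2 (b i) with hb | hb <;>
        rw [hz, hb] at hxi <;> rw [hz, ha, hb, hxi] <;>
        simp only [z2a00, z2a01, z2a10, z2a11, z2s00, z2s01, z2s10, z2s11,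
          z2m00, z2m01, z2m10, z2m11, add_zero, zero_add, mul_zero, zero_mul,
          mul_one, one_mul, sub_zero, sgn_add, sgn_zero, sgn_one] <;>
        first
        | ring1
        | linear_combination (2 : ℂ) * c * sgn L * rr_sq
        | linear_combination (-2 : ℂ) * c * sgn L * rr_sq
  · rw [if_neg hcond, if_neg hcond, if_neg]
    · ring
    · intro hh
      apply hcond
      intro j hj
      have := congrFun hh j
      rw [Pi.add_apply, Function.update_of_ne hj] at this
      rw [this, add_assoc, z2_add_self, add_zero]

/-- Hadamards on any wire set conjugate Paulis to Paulis. -/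
lemma HT_conj_pauli (T : Finset (Fin n)) : ∀ M ∈ Pauli n, Hmat T * M * Hmat T ∈ Pauli n := by
  induction T using Finset.induction_on with
  | empty =>
    intro M hM
    rw [Hmat_empty, one_mul, mul_one]
    exact hM
  | @insert i T hi IH =>
    intro M hM
    rw [Hmat_insert hi]
    have e : Hmat {i} * Hmat T * M * (Hmat {i} * Hmat T)
        = Hmat {i} * (Hmat T * M * Hmat T) * Hmat {i} := by
      simp only [mul_assoc]
      rw [← HT_comm_single hi]
    rw [e]
    obtain ⟨c, a, b, hc, hrep⟩ := pauli_PX (IH M hM)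
    rw [hrep, single_conj_PX]
    exact PX_pauli _ _ (pow4_mul hc (sgn_pow4 _))
/-! ### Assembling products of gates -/

lemma conj_mul_split (C A B' : QMat n) (hC : C * C = 1) :
    C * (A * B') * C = (C * A * C) * (C * B' * C) := by
  have h : C * (C * (B' * C)) = B' * C := by rw [← mul_assoc, hC, one_mul]
  simp only [mul_assoc]
  rw [h]

lemma addform (B : Finset (Fin n)) :
    ∀ (L : List (Fin n × Finset (Fin n) × QState n)),
      (∀ g ∈ L, g.1 ∈ B) → (∀ g ∈ L, g.1 ∉ g.2.1) → (∀ g ∈ L, ∀ i ∈ g.2.1, i ∉ B) →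
      ∃ U : QState n → QState n, Adm B U ∧
        ((L.map fun g => mcxMat g.1 g.2.1 g.2.2).prod
          = Mono (fun y => y + U y) (fun _ => 1)) := by
  intro L
  induction L with
  | nil =>
    intro _ _ _
    refine ⟨fun _ => 0, ⟨fun _ _ _ => rfl, fun _ _ _ => rfl⟩, ?_⟩
    rw [List.map_nil, List.prod_nil, ← Mono_one]
    exact Mono_congr (fun y => by simp) (fun _ => rfl)
  | cons g L IH =>
    intro h1 h2 h3
    obtain ⟨U, hAdm, hprod⟩ := IH (fun g' hg' => h1 g' (List.mem_cons_of_mem g hg'))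
      (fun g' hg' => h2 g' (List.mem_cons_of_mem g hg'))
      (fun g' hg' => h3 g' (List.mem_cons_of_mem g hg'))
    have hgB : g.1 ∈ B := h1 g (List.mem_cons_self (a := g) (l := L))
    have hgS : ∀ i ∈ g.2.1, i ∉ B := h3 g (List.mem_cons_self (a := g) (l := L))
    refine ⟨fun y => U y + (if ∀ j ∈ g.2.1, y j = g.2.2 j then unitv g.1 else 0), ?_, ?_⟩
    · constructor
      · intro y i hi
        show (U y + _) i = 0
        rw [Pi.add_apply, hAdm.1 y i hi, zero_add]
        split_ifs
        · rw [unitv, Function.update_of_ne (fun h => hi (by rw [h]; exact hgB))]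
          rfl
        · rfl
      · intro y z hyz
        have hU := hAdm.2 y z hyz
        have hcond : (∀ j ∈ g.2.1, y j = g.2.2 j) ↔ (∀ j ∈ g.2.1, z j = g.2.2 j) := by
          constructor
          · intro h j hj; rw [← hyz j (hgS j hj)]; exact h j hj
          · intro h j hj; rw [hyz j (hgS j hj)]; exact h j hj
        show U y + (if ∀ j ∈ g.2.1, y j = g.2.2 j then unitv g.1 else 0)
           = U z + (if ∀ j ∈ g.2.1, z j = g.2.2 j then unitv g.1 else 0)
        rw [hU, if_congr hcond rfl rfl]
    · rw [List.map_cons, List.prod_cons, hprod, mcxMat_eq, Mono_mul]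
      have hmcx : ∀ z : QState n, mcxFun g.1 g.2.1 g.2.2 z
          = z + (if ∀ j ∈ g.2.1, z j = g.2.2 j then unitv g.1 else 0) := by
        intro z
        funext j
        unfold mcxFun
        by_cases hcz : ∀ j ∈ g.2.1, z j = g.2.2 j
        · rw [if_pos hcz, if_pos hcz, Pi.add_apply]
          by_cases hj : j = g.1
          · subst hj
            rw [Function.update_self, unitv, Function.update_self]
          · rw [Function.update_of_ne hj, unitv, Function.update_of_ne hj, Pi.zero_apply,
              add_zero]
        · rw [if_neg hcz, if_neg hcz, Pi.add_apply, Pi.zero_apply, add_zero]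
      apply Mono_congr _ (fun y => by rw [one_mul])
      intro y
      show mcxFun g.1 g.2.1 g.2.2 (y + U y) = y + (U y + _)
      rw [hmcx]
      have hcsame : (∀ j ∈ g.2.1, (y + U y) j = g.2.2 j) ↔ (∀ j ∈ g.2.1, y j = g.2.2 j) := by
        constructor
        · intro h j hj
          have := h j hj
          rwa [Pi.add_apply, hAdm.1 y j (hgS j hj), add_zero] at this
        · intro h j hj
          rw [Pi.add_apply, hAdm.1 y j (hgS j hj), add_zero]
          exact h j hj
      rw [if_congr hcsame rfl rfl, add_assoc]

lemma aux_conj (T : Finset (Fin n)) :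
    ∀ (L : List (Fin n × Finset (Fin n) × QState n)),
      (∀ g ∈ L, g.1 ∉ g.2.1) → (∀ g ∈ L, ∀ i ∈ g.2.1, i ∉ T) →
      ∃ (ψ : QState n → QState n) (F : QState n → ZMod 2),
        (((L.filter fun g => decide (g.1 ∉ T)).map fun g => mcxMat g.1 g.2.1 g.2.2).prod
            = Mono ψ (fun _ => 1)) ∧
        Hmat T * (L.map fun g => mcxMat g.1 g.2.1 g.2.2).prod * Hmat T
          = ((L.filter fun g => decide (g.1 ∉ T)).map fun g => mcxMat g.1 g.2.1 g.2.2).prod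
            * Mono id (fun y => sgn (F y)) := by
  intro L
  induction L with
  | nil =>
    intro _ _
    refine ⟨id, fun _ => 0, ?_, ?_⟩
    · rw [List.filter_nil, List.map_nil, List.prod_nil, ← Mono_one]
    · rw [List.filter_nil, List.map_nil, List.prod_nil, mul_one, Hmat_sq, one_mul,
        ← Mono_one]
      exact Mono_congr (fun y => rfl) (fun y => by rw [sgn_zero])
  | cons g L IH =>
    intro h1 h2
    obtain ⟨ψ, F, hψ, hH⟩ := IH (fun g' hg' => h1 g' (List.mem_cons_of_mem g hg'))
      (fun g' hg' => h2 g' (List.mem_cons_of_mem g hg'))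
    have hg1 := h1 g (List.mem_cons_self (a := g) (l := L))
    have hg2 := h2 g (List.mem_cons_self (a := g) (l := L))
    by_cases hgT : g.1 ∈ T
    · have hfilter : (g :: L).filter (fun g => decide (g.1 ∉ T))
          = L.filter (fun g => decide (g.1 ∉ T)) := by
        simp [List.filter_cons, hgT]
      have hconj := HT_conj_mcx (p := g.2.2) hg1 hgT hg2
      refine ⟨ψ, fun y => (if ∀ j ∈ g.2.1, ψ y j = g.2.2 j then ψ y g.1 else 0) + F y, ?_, ?_⟩
      · rw [hfilter]
        exact hψ
      · rw [List.map_cons, List.prod_cons, conj_mul_split _ _ _ (Hmat_sq T), hconj, hH,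
          hfilter, hψ, ← mul_assoc, Mono_mul, Mono_mul, Mono_mul]
        apply Mono_congr (fun y => rfl)
        intro y
        rw [sgn_add]
        simp only [id_eq]
        ring
    · have hfilter : (g :: L).filter (fun g => decide (g.1 ∉ T))
          = g :: L.filter (fun g => decide (g.1 ∉ T)) := by
        simp [List.filter_cons, hgT]
      have hconj : Hmat T * mcxMat g.1 g.2.1 g.2.2 * Hmat T = mcxMat g.1 g.2.1 g.2.2 := by
        rw [mcx_comm_HT hg1 hgT hg2, mul_assoc, Hmat_sq, mul_one]
      refine ⟨mcxFun g.1 g.2.1 g.2.2 ∘ ψ, F, ?_, ?_⟩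
      · rw [hfilter, List.map_cons, List.prod_cons, hψ, mcxMat_eq, Mono_mul]
        exact Mono_congr (fun y => rfl) (fun y => by rw [one_mul])
      · rw [List.map_cons, List.prod_cons, conj_mul_split _ _ _ (Hmat_sq T), hconj, hH,
          hfilter, List.map_cons, List.prod_cons, ← mul_assoc]
/-- every 1-wire-mismatch permutation gate P₁ can be rewritten
as X⃗ · H_targ · P · D · H_targ with P a 0-wire-mismatch permutation in the
Clifford Hierarchy and D a diagonal gate in the Clifford Hierarchy; hence
P₁ is in the Clifford Hierarchy. -/
theorem one_wire_mismatch_in_CH {n : ℕ}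
    (L : List (Fin n × Finset (Fin n) × QState n)) (P₁ : QMat n)
    (hwf : ∀ g ∈ L, g.1 ∉ g.2.1)
    (hP₁ : P₁ = (L.map fun g => mcxMat g.1 g.2.1 g.2.2).prod)
    (hmm : ∃! w : Fin n,
      (∃ g ∈ L, g.1 = w) ∧ ∃ h ∈ L, w ∈ h.2.1) :
    ∃ (v : QState n) (T : Finset (Fin n)) (P D : QMat n),
      (∃ L' : List (Fin n × Finset (Fin n) × QState n),
        (∀ g ∈ L', ∀ h ∈ L', g.1 ∉ h.2.1) ∧
        P = (L'.map fun g => mcxMat g.1 g.2.1 g.2.2).prod) ∧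
      InCH P ∧ D.IsDiag ∧ InCH D ∧
      P₁ = XStr v * Hmat T * P * D * Hmat T ∧ InCH P₁ := by
  classical
  obtain ⟨w, _hw, huniq⟩ := hmm
  set T : Finset (Fin n) := ((L.filter fun g => decide (w ∈ g.2.1)).map (fun g => g.1)).toFinset
    with hT
  have hmemT : ∀ t, t ∈ T ↔ ∃ g, g ∈ L ∧ w ∈ g.2.1 ∧ g.1 = t := by
    intro t
    rw [hT, List.mem_toFinset, List.mem_map]
    constructor
    · rintro ⟨g, hg, rfl⟩
      have := List.mem_filter.mp hg
      exact ⟨g, this.1, by simpa using this.2, rfl⟩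
    · rintro ⟨g, hgL, hgw, rfl⟩
      exact ⟨g, List.mem_filter.mpr ⟨hgL, by simpa using hgw⟩, rfl⟩
  have hwT : w ∉ T := by
    intro hwT
    obtain ⟨g, hgL, hgw, hgt⟩ := (hmemT w).mp hwT
    apply hwf g hgL
    rw [hgt]
    exact hgw
  have hTnoctrl : ∀ t ∈ T, ∀ h ∈ L, t ∉ h.2.1 := by
    intro t htT h hhL hth
    obtain ⟨g, hgL, _hgw, hgt⟩ := (hmemT t).mp htT
    have htw : t = w := huniq t ⟨⟨g, hgL, hgt⟩, ⟨h, hhL, hth⟩⟩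
    apply hwT
    rw [← htw]
    exact htT
  have hctrlT : ∀ g ∈ L, ∀ i ∈ g.2.1, i ∉ T := fun g hg i hi hiT => hTnoctrl i hiT g hg hi
  obtain ⟨ψ, F, hψ, hH⟩ := aux_conj T L hwf hctrlT
  set L' := L.filter (fun g => decide (g.1 ∉ T)) with hL'
  have hmemL' : ∀ g ∈ L', g ∈ L ∧ g.1 ∉ T := by
    intro g hg
    have := List.mem_filter.mp hg
    exact ⟨this.1, by simpa using this.2⟩
  have h0mm : ∀ g ∈ L', ∀ h ∈ L', g.1 ∉ h.2.1 := by
    intro g hg h hh hgh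
    obtain ⟨hgL, _hgT⟩ := hmemL' g hg
    obtain ⟨hhL, hhT⟩ := hmemL' h hh
    have hgw : g.1 = w := huniq g.1 ⟨⟨g, hgL, rfl⟩, ⟨h, hhL, hgh⟩⟩
    apply hhT
    exact (hmemT h.1).mpr ⟨h, hhL, by rw [← hgw]; exact hgh, rfl⟩
  set B : Finset (Fin n) := (L'.map (fun g => g.1)).toFinset with hB
  have hB1 : ∀ g ∈ L', g.1 ∈ B := fun g hg =>
    List.mem_toFinset.mpr (List.mem_map.mpr ⟨g, hg, rfl⟩)
  have hB3 : ∀ g ∈ L', ∀ i ∈ g.2.1, i ∉ B := by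
    intro g hg i hi hiB
    obtain ⟨h, hh, hh1⟩ := List.mem_map.mp (List.mem_toFinset.mp hiB)
    apply h0mm h hh g hg
    rw [hh1]
    exact hi
  obtain ⟨U, hAdmU, hU⟩ := addform B L' hB1 (fun g hg => hwf g (hmemL' g hg).1) hB3
  set P : QMat n := (L'.map fun g => mcxMat g.1 g.2.1 g.2.2).prod with hP
  set D : QMat n := Mono id (fun y => sgn (F y)) with hD
  have hPDeq : Hmat T * P₁ * Hmat T = P * D := by
    rw [hP₁]
    exact hH
  have hP₁eq : P₁ = Hmat T * (P * D) * Hmat T := by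
    rw [← hPDeq]
    calc P₁ = (Hmat T * Hmat T) * P₁ * (Hmat T * Hmat T) := by
          rw [Hmat_sq, one_mul, mul_one]
      _ = Hmat T * (Hmat T * P₁ * Hmat T) * Hmat T := by simp only [mul_assoc]
  have hPDgen : P * D = Gen 1 0 U F := by
    rw [hU, hD, Mono_mul, Gen]
    apply Mono_congr
    · intro y
      show y + U (id y) = y + 0 + U y
      rw [id_eq, add_zero]
    · intro y
      show (1 : ℂ) * sgn (F y) = 1 * sgn (F y)
      rfl
  refine ⟨0, T, P, D, ⟨L', h0mm, hP⟩, ?_, ?_, ?_, ?_, ?_⟩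
  · have hPgen : P = Gen 1 0 U (fun _ => 0) := by
      rw [hU, Gen]
      apply Mono_congr
      · intro y
        rw [add_zero]
      · intro y
        rw [sgn_zero, mul_one]
    rw [hPgen]
    exact InCH_gen hAdmU 0 _ (one_pow 4)
  · rw [hD, Mono_id_diag]
    exact Matrix.isDiag_diagonal _
  · have hDgen : D = Gen 1 0 (fun _ => 0) F := by
      rw [hD, Gen]
      apply Mono_congr
      · intro y
        show id y = y + 0 + 0
        rw [id_eq, add_zero, add_zero]
      · intro y
        rw [one_mul]
    rw [hDgen]
    exact InCH_gen Adm_zero 0 F (one_pow 4)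
  · rw [hP₁eq, XStr_zero, one_mul]
    simp only [mul_assoc]
  · obtain ⟨k, hk⟩ := InCH_gen hAdmU 0 F (one_pow 4)
    refine ⟨k, ?_⟩
    rw [hP₁eq, hPDgen]
    have hconj := CH_conj (Hmat_unitary T)
      (fun p hp => by rw [star_Hmat]; exact HT_conj_pauli T p hp)
      (fun p hp => by rw [star_Hmat]; exact HT_conj_pauli T p hp) k _ hk
    rwa [star_Hmat] at hconj
end CHPaper
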